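/- Let p > 2 and g(x) = p c_p |x|^p. There exists C > 0 such that for all real t, λ: |g'(t) − g'(λ) − (t−λ) g''(λ)| ≤ C |t−λ|² (max(|λ|,|t|))^{p−3}, and |g''(t) − g''(λ)| ≤ C |t−λ| (max(|λ|,|t|))^{p−3}. -/

import Mathlib

open Real Set Filter

/-- `1 - s^q ≤ max q 1 * (1 - s)` for `s ∈ [0,1]`, `q > 0`. -/
lemma aux_one_sub_rpow {q s : ℝ} (hq : 0 < q) (hs0 : 0 ≤ s) (hs1 : s ≤ 1) :
    1 - s ^ q ≤ max q 1 * (1 - s) := by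
  have hmax1 : (1 : ℝ) ≤ max q 1 := le_max_right _ _
  rcases le_total q 1 with hq1 | hq1
  · rcases eq_or_lt_of_le hs0 with rfl | hs0'
    · rw [Real.zero_rpow hq.ne']
      nlinarith
    · have h1 : s ^ (1 : ℝ) ≤ s ^ q := Real.rpow_le_rpow_of_exponent_ge hs0' hs1 hq1
      rw [Real.rpow_one] at h1
      nlinarith
  · have hB := one_add_mul_self_le_rpow_one_add (show (-1 : ℝ) ≤ s - 1 by linarith) hq1
    have : (1 + (s - 1)) = s := by ring
    rw [this] at hB
    have hqmax : q ≤ max q 1 := le_max_left _ _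
    nlinarith

/-- `M^q - m^q ≤ max q 1 * ((M - m) * M^(q-1))` for `0 ≤ m ≤ M`. -/
lemma aux_rpow_sub_rpow {q m M : ℝ} (hq : 0 < q) (hm : 0 ≤ m) (hmM : m ≤ M) :
    M ^ q - m ^ q ≤ max q 1 * ((M - m) * M ^ (q - 1)) := by
  rcases eq_or_lt_of_le (hm.trans hmM) with hM | hM
  · have hm0 : m = 0 := le_antisymm (by rw [hM]; exact hmM) hm
    rw [← hM, hm0]
    simp [Real.zero_rpow hq.ne']
  · set s : ℝ := m / M with hs
    have hs0 : 0 ≤ s := div_nonneg hm hM.le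
    have hs1 : s ≤ 1 := (div_le_one hM).mpr hmM
    have key := aux_one_sub_rpow hq hs0 hs1
    have hmsM : m = s * M := by rw [hs]; field_simp
    have hmq : m ^ q = s ^ q * M ^ q := by
      rw [hmsM, Real.mul_rpow hs0 hM.le]
    have hMq : M * M ^ (q - 1) = M ^ q := by
      rw [mul_comm, ← Real.rpow_add_one hM.ne']; ring_nf
    have hMqpos : 0 < M ^ q := Real.rpow_pos_of_pos hM _
    calc M ^ q - m ^ q = (1 - s ^ q) * M ^ q := by rw [hmq]; ring
      _ ≤ (max q 1 * (1 - s)) * M ^ q := by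
          apply mul_le_mul_of_nonneg_right key hMqpos.le
      _ = max q 1 * ((M - m) * M ^ (q - 1)) := by
          rw [← hMq, hmsM]; ring

lemma aux_abs_rpow_sub' {q : ℝ} (hq : 0 < q) {x y : ℝ} (h : |y| ≤ |x|) :
    |(|x| ^ q - |y| ^ q)| ≤ max q 1 * (|x - y| * |x| ^ (q - 1)) := by
  have h1 : |y| ^ q ≤ |x| ^ q := Real.rpow_le_rpow (abs_nonneg _) h hq.le
  rw [abs_of_nonneg (by linarith)]
  calc |x| ^ q - |y| ^ q ≤ max q 1 * ((|x| - |y|) * |x| ^ (q - 1)) :=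
        aux_rpow_sub_rpow hq (abs_nonneg _) h
    _ ≤ max q 1 * (|x - y| * |x| ^ (q - 1)) := by
        apply mul_le_mul_of_nonneg_left _ (le_trans zero_le_one (le_max_right _ _))
        exact mul_le_mul_of_nonneg_right (abs_sub_abs_le_abs_sub _ _)
          (Real.rpow_nonneg (abs_nonneg _) _)

lemma aux_abs_rpow_sub {q : ℝ} (hq : 0 < q) (x y : ℝ) :
    |(|x| ^ q - |y| ^ q)| ≤ max q 1 * (|x - y| * (max |y| |x|) ^ (q - 1)) := by
  rcases le_total |y| |x| with h | h
  · rw [max_eq_right h]; exact aux_abs_rpow_sub' hq h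
  · rw [max_eq_left h, abs_sub_comm (|x| ^ q), abs_sub_comm x y]
    exact aux_abs_rpow_sub' hq h
/-- Segment version: for `s` between `lam` and `t`. -/
lemma aux_seg {q : ℝ} (hq : 0 < q) (lam t : ℝ) {s : ℝ} (hs : s ∈ Set.uIcc lam t) :
    |(|s| ^ q - |lam| ^ q)| ≤
      (max q 1 + 2 ^ (1 - q) + 2) * (|t - lam| * (max |lam| |t|) ^ (q - 1)) := by
  set C2 : ℝ := max q 1 + 2 ^ (1 - q) + 2 with hC2
  set D : ℝ := |t - lam| with hD
  set M : ℝ := max |lam| |t| with hM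
  have h2pos : (0 : ℝ) < 2 ^ (1 - q) := Real.rpow_pos_of_pos two_pos _
  have hmax1 : (1 : ℝ) ≤ max q 1 := le_max_right _ _
  have hD0 : 0 ≤ D := abs_nonneg _
  have hM0 : 0 ≤ M := le_trans (abs_nonneg _) (le_max_left _ _)
  have hsl : |s - lam| ≤ D := by
    have := Real.dist_le_of_mem_uIcc hs (Set.left_mem_uIcc (a := lam) (b := t))
    rwa [Real.dist_eq, Real.dist_eq, abs_sub_comm lam t] at this
  have hst : |t - s| ≤ D := by
    have := Real.dist_le_of_mem_uIcc (Set.right_mem_uIcc (a := lam) (b := t)) hs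
    rwa [Real.dist_eq, Real.dist_eq, abs_sub_comm lam t] at this
  have hsM : |s| ≤ M := by
    rcases Set.mem_uIcc.mp hs with ⟨h1, h2⟩ | ⟨h1, h2⟩
    · exact abs_le_max_abs_abs h1 h2
    · rw [hM, max_comm]; exact abs_le_max_abs_abs h1 h2
  have hlamM : |lam| ≤ M := le_max_left _ _
  have htM : |t| ≤ M := le_max_right _ _
  have key := aux_abs_rpow_sub hq s lam
  by_cases hq1 : 1 ≤ q
  · calc |(|s| ^ q - |lam| ^ q)| ≤ max q 1 * (|s - lam| * (max |lam| |s|) ^ (q - 1)) := key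
      _ ≤ max q 1 * (D * M ^ (q - 1)) := by
          apply mul_le_mul_of_nonneg_left _ (by linarith)
          apply mul_le_mul hsl _ (Real.rpow_nonneg (le_trans (abs_nonneg _) (le_max_left _ _)) _) hD0
          exact Real.rpow_le_rpow (le_trans (abs_nonneg _) (le_max_left _ _))
            (max_le hlamM hsM) (by linarith)
      _ ≤ C2 * (D * M ^ (q - 1)) := by
          apply mul_le_mul_of_nonneg_right _ (mul_nonneg hD0 (Real.rpow_nonneg hM0 _))
          rw [hC2]; linarith
  · push_neg at hq1
    have hmaxq : max q 1 = 1 := max_eq_right hq1.le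
    by_cases hMz : M = 0
    · have hl0 : |lam| = 0 := le_antisymm (hMz ▸ hlamM) (abs_nonneg _)
      have hs0 : |s| = 0 := le_antisymm (hMz ▸ hsM) (abs_nonneg _)
      rw [hl0, hs0]
      simp only [sub_self, abs_zero]
      positivity
    · have hMpos : 0 < M := lt_of_le_of_ne hM0 (Ne.symm hMz)
      by_cases hD2 : D ≤ M / 2
      · -- far from zero case: max |lam| |s| ≥ M/2
        have hs2 : M / 2 ≤ max |lam| |s| := by
          rcases le_total |t| |lam| with h | h
          · calc M / 2 ≤ M := by linarith
              _ = |lam| := by rw [hM, max_eq_left h]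
              _ ≤ max |lam| |s| := le_max_left _ _
          · have hMt : M = |t| := by rw [hM, max_eq_right h]
            have h1 : |t| - |s| ≤ |t - s| := abs_sub_abs_le_abs_sub _ _
            calc M / 2 ≤ |s| := by linarith [hMt]
              _ ≤ max |lam| |s| := le_max_right _ _
        have hhalf : (max |lam| |s|) ^ (q - 1) ≤ (M / 2) ^ (q - 1) :=
          Real.rpow_le_rpow_of_nonpos (by linarith) hs2 (by linarith)
        have hMhalf : (M / 2) ^ (q - 1) = 2 ^ (1 - q) * M ^ (q - 1) := by
          rw [Real.div_rpow hM0 (by norm_num : (0:ℝ) ≤ 2), div_eq_mul_inv,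
            ← Real.rpow_neg (by norm_num : (0:ℝ) ≤ 2), mul_comm]
          ring_nf
        calc |(|s| ^ q - |lam| ^ q)| ≤ max q 1 * (|s - lam| * (max |lam| |s|) ^ (q - 1)) := key
          _ = |s - lam| * (max |lam| |s|) ^ (q - 1) := by rw [hmaxq, one_mul]
          _ ≤ D * (2 ^ (1 - q) * M ^ (q - 1)) := by
              rw [← hMhalf]
              exact mul_le_mul hsl hhalf (Real.rpow_nonneg
                (le_trans (abs_nonneg _) (le_max_left _ _)) _) hD0
          _ = 2 ^ (1 - q) * (D * M ^ (q - 1)) := by ring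
          _ ≤ C2 * (D * M ^ (q - 1)) := by
              apply mul_le_mul_of_nonneg_right _ (mul_nonneg hD0 (Real.rpow_nonneg hM0 _))
              rw [hC2]; linarith
      · -- |t - lam| large: crude bound by M^q
        push_neg at hD2
        have hbs : |s| ^ q ≤ M ^ q := Real.rpow_le_rpow (abs_nonneg _) hsM hq.le
        have hbl : |lam| ^ q ≤ M ^ q := Real.rpow_le_rpow (abs_nonneg _) hlamM hq.le
        have hs0 : 0 ≤ |s| ^ q := Real.rpow_nonneg (abs_nonneg _) _
        have hl0 : 0 ≤ |lam| ^ q := Real.rpow_nonneg (abs_nonneg _) _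
        have hMq : M ^ q = M * M ^ (q - 1) := by
          nth_rewrite 1 [show q = (q - 1) + 1 by ring]
          rw [Real.rpow_add_one hMpos.ne']; ring
        have hMq0 : 0 ≤ M ^ (q - 1) := Real.rpow_nonneg hM0 _
        calc |(|s| ^ q - |lam| ^ q)| ≤ M ^ q := by rw [abs_sub_le_iff]; constructor <;> linarith
          _ = M * M ^ (q - 1) := hMq
          _ ≤ 2 * D * M ^ (q - 1) := by nlinarith
          _ ≤ C2 * (D * M ^ (q - 1)) := by
              have hx : 0 ≤ D * M ^ (q - 1) := mul_nonneg hD0 hMq0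
              rw [hC2]; nlinarith

/-- Derivative of `x ↦ |x|^(p-2) * x` is `(p-1)|x|^(p-2)`, for `p > 2`. -/
lemma aux_hasDerivAt_h1 {p : ℝ} (hp : 2 < p) (x : ℝ) :
    HasDerivAt (fun y : ℝ => |y| ^ (p - 2) * y) ((p - 1) * |x| ^ (p - 2)) x := by
  rcases lt_trichotomy x 0 with hx | rfl | hx
  · -- x < 0 : function equals y ↦ -(-y)^(p-1) near x
    have Hneg : HasDerivAt (fun y : ℝ => -y) (-1 : ℝ) x := (hasDerivAt_id x).neg
    have H0 : HasDerivAt (fun z : ℝ => z ^ (p - 1)) ((p - 1) * (-x) ^ (p - 1 - 1)) (-x) :=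
      Real.hasDerivAt_rpow_const (Or.inl (by linarith : (-x) ≠ 0))
    have H1 : HasDerivAt (fun y : ℝ => (-y) ^ (p - 1))
        ((p - 1) * (-x) ^ (p - 1 - 1) * (-1)) x := H0.comp x Hneg
    have H2 := H1.neg
    have heq : (fun y : ℝ => |y| ^ (p - 2) * y) =ᶠ[nhds x] fun y => -((-y) ^ (p - 1)) := by
      filter_upwards [eventually_lt_nhds hx] with y hy
      rw [abs_of_neg hy, show p - 1 = (p - 2) + 1 by ring,
        Real.rpow_add_one (by linarith : (-y) ≠ 0)]
      ring
    have := H2.congr_of_eventuallyEq heq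
    refine this.congr_deriv ?_
    rw [abs_of_neg hx, show p - 1 - 1 = p - 2 by ring]
    ring
  · -- x = 0
    have hd : ((p - 1) * |(0 : ℝ)| ^ (p - 2)) = 0 := by
      simp [Real.zero_rpow (by linarith : p - 2 ≠ 0)]
    rw [hd, hasDerivAt_iff_tendsto_slope]
    have heq : (fun y : ℝ => |y| ^ (p - 2)) =ᶠ[nhdsWithin 0 {(0:ℝ)}ᶜ]
        slope (fun y : ℝ => |y| ^ (p - 2) * y) 0 := by
      filter_upwards [self_mem_nhdsWithin] with y hy
      have hy0 : y ≠ 0 := hy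
      rw [slope_def_field]
      field_simp
      simp
    apply Filter.Tendsto.congr' heq
    have hcont : ContinuousAt (fun y : ℝ => |y| ^ (p - 2)) 0 :=
      (Real.continuousAt_rpow_const _ _ (Or.inr (by linarith))).comp continuous_abs.continuousAt
    have h0 : |(0 : ℝ)| ^ (p - 2) = 0 := by
      simp [Real.zero_rpow (by linarith : p - 2 ≠ 0)]
    have := hcont.tendsto
    rw [h0] at this
    exact this.mono_left nhdsWithin_le_nhds
  · -- 0 < x
    have H0 : HasDerivAt (fun z : ℝ => z ^ (p - 1)) ((p - 1) * x ^ (p - 1 - 1)) x :=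
      Real.hasDerivAt_rpow_const (Or.inl hx.ne')
    have heq : (fun y : ℝ => |y| ^ (p - 2) * y) =ᶠ[nhds x] fun y => y ^ (p - 1) := by
      filter_upwards [eventually_gt_nhds hx] with y hy
      rw [abs_of_pos hy, show p - 1 = (p - 2) + 1 by ring, Real.rpow_add_one hy.ne']
    have := H0.congr_of_eventuallyEq heq
    refine this.congr_deriv ?_
    rw [abs_of_pos hx, show p - 1 - 1 = p - 2 by ring]

/-- `g(x) = p · c_p · |x|^p`. -/
noncomputable def gfun (p c : ℝ) : ℝ → ℝ := fun x => p * c * |x| ^ p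

/-- Improved Taylor remainder bounds for `g'` and `g''`, where `g(x) = p c_p |x|^p`, `p > 2`:
there is `C > 0` such that for all real `t, λ`,
`|g'(t) − g'(λ) − (t−λ)g''(λ)| ≤ C|t−λ|² (max(|λ|,|t|))^{p−3}` and
`|g''(t) − g''(λ)| ≤ C|t−λ| (max(|λ|,|t|))^{p−3}`. -/
theorem stmt4 (p c : ℝ) (hp : 2 < p) (hc : 0 < c) :
    ∃ C > 0, ∀ t lam : ℝ,
      |deriv (gfun p c) t - deriv (gfun p c) lam
          - (t - lam) * deriv (deriv (gfun p c)) lam|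
        ≤ C * |t - lam| ^ 2 * (max |lam| |t|) ^ (p - 3) ∧
      |deriv (deriv (gfun p c)) t - deriv (deriv (gfun p c)) lam|
        ≤ C * |t - lam| * (max |lam| |t|) ^ (p - 3) := by
  have hq : (0 : ℝ) < p - 2 := by linarith
  have hp1 : (0 : ℝ) < p - 1 := by linarith
  have hp0 : (0 : ℝ) < p := by linarith
  have hA : (0 : ℝ) < p * c * p := mul_pos (mul_pos hp0 hc) hp0
  -- first derivative
  have dg : deriv (gfun p c) = fun x => (p * c * p) * (|x| ^ (p - 2) * x) := by
    funext x
    have h : HasDerivAt (gfun p c) ((p * c) * (p * |x| ^ (p - 2) * x)) x :=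
      (hasDerivAt_abs_rpow x (show (1 : ℝ) < p by linarith)).const_mul (p * c)
    rw [h.deriv]; ring
  -- second derivative
  have ddg : deriv (deriv (gfun p c)) = fun x => (p * c * p * (p - 1)) * |x| ^ (p - 2) := by
    rw [dg]; funext x
    have h := (aux_hasDerivAt_h1 hp x).const_mul (p * c * p)
    rw [h.deriv]; ring
  set C2 : ℝ := max (p - 2) 1 + 2 ^ (1 - (p - 2)) + 2 with hC2def
  have hC2pos : (0 : ℝ) < C2 := by
    have h2pos : (0 : ℝ) < 2 ^ (1 - (p - 2)) := Real.rpow_pos_of_pos two_pos _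
    have : (1 : ℝ) ≤ max (p - 2) 1 := le_max_right _ _
    rw [hC2def]; linarith
  refine ⟨(p * c * p) * ((p - 1) * C2), by positivity, fun t lam => ?_⟩
  rw [ddg, dg]
  simp only
  set D : ℝ := |t - lam| with hD
  set M : ℝ := max |lam| |t| with hM
  have hD0 : 0 ≤ D := abs_nonneg _
  have hM0 : 0 ≤ M := le_trans (abs_nonneg _) (le_max_left _ _)
  have hMq0 : 0 ≤ M ^ (p - 2 - 1) := Real.rpow_nonneg hM0 _
  have hexp : p - 3 = p - 2 - 1 := by ring
  constructor
  · -- Taylor remainder bound via MVT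
    set B : ℝ := (p - 1) * (C2 * (D * M ^ (p - 2 - 1))) with hB
    have mvt : |(|t| ^ (p - 2) * t - |lam| ^ (p - 2) * lam
        - (t - lam) * ((p - 1) * |lam| ^ (p - 2)))| ≤ B * D := by
      have hconv : Convex ℝ (Set.uIcc lam t) := convex_uIcc _ _
      have hder : ∀ s ∈ Set.uIcc lam t,
          HasDerivWithinAt (fun y => |y| ^ (p - 2) * y - y * ((p - 1) * |lam| ^ (p - 2)))
            ((p - 1) * |s| ^ (p - 2) - (p - 1) * |lam| ^ (p - 2)) (Set.uIcc lam t) s := by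
        intro s _
        have h1 := (aux_hasDerivAt_h1 hp s).sub
          (hasDerivAt_mul_const ((p - 1) * |lam| ^ (p - 2)) (x := s))
        have h2 : (p - 1) * |s| ^ (p - 2) - (p - 1) * |lam| ^ (p - 2)
            = (p - 1) * |s| ^ (p - 2) - ((p - 1) * |lam| ^ (p - 2)) := by ring
        rw [h2]
        exact h1.hasDerivWithinAt
      have hbound : ∀ s ∈ Set.uIcc lam t,
          ‖(p - 1) * |s| ^ (p - 2) - (p - 1) * |lam| ^ (p - 2)‖ ≤ B := by
        intro s hs
        have key := aux_seg hq lam t hs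
        rw [Real.norm_eq_abs, show (p - 1) * |s| ^ (p - 2) - (p - 1) * |lam| ^ (p - 2)
          = (p - 1) * (|s| ^ (p - 2) - |lam| ^ (p - 2)) by ring, abs_mul,
          abs_of_pos hp1, hB]
        exact mul_le_mul_of_nonneg_left key hp1.le
      have := hconv.norm_image_sub_le_of_norm_hasDerivWithin_le hder hbound
        (Set.left_mem_uIcc) (Set.right_mem_uIcc)
      rw [Real.norm_eq_abs, Real.norm_eq_abs] at this
      calc |(|t| ^ (p - 2) * t - |lam| ^ (p - 2) * lam
            - (t - lam) * ((p - 1) * |lam| ^ (p - 2)))|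
          = |(|t| ^ (p - 2) * t - t * ((p - 1) * |lam| ^ (p - 2)))
            - (|lam| ^ (p - 2) * lam - lam * ((p - 1) * |lam| ^ (p - 2)))| := by ring_nf
        _ ≤ B * |t - lam| := this
        _ = B * D := by rw [hD]
    have factor : (p * c * p) * (|t| ^ (p - 2) * t) - (p * c * p) * (|lam| ^ (p - 2) * lam)
        - (t - lam) * ((p * c * p * (p - 1)) * |lam| ^ (p - 2))
        = (p * c * p) * ((|t| ^ (p - 2) * t - |lam| ^ (p - 2) * lam
          - (t - lam) * ((p - 1) * |lam| ^ (p - 2)))) := by ring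
    rw [factor, abs_mul, abs_of_pos hA, hexp]
    calc (p * c * p) * |(|t| ^ (p - 2) * t - |lam| ^ (p - 2) * lam
          - (t - lam) * ((p - 1) * |lam| ^ (p - 2)))|
        ≤ (p * c * p) * (B * D) := mul_le_mul_of_nonneg_left mvt hA.le
      _ = (p * c * p) * ((p - 1) * C2) * D ^ 2 * M ^ (p - 2 - 1) := by rw [hB]; ring
  · -- second inequality
    have key := aux_seg hq lam t (Set.right_mem_uIcc (a := lam) (b := t))
    have factor : (p * c * p * (p - 1)) * |t| ^ (p - 2)
        - (p * c * p * (p - 1)) * |lam| ^ (p - 2)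
        = (p * c * p * (p - 1)) * (|t| ^ (p - 2) - |lam| ^ (p - 2)) := by ring
    rw [factor, abs_mul, abs_of_pos (by positivity : (0:ℝ) < p * c * p * (p - 1)), hexp]
    calc (p * c * p * (p - 1)) * |(|t| ^ (p - 2) - |lam| ^ (p - 2))|
        ≤ (p * c * p * (p - 1)) * (C2 * (D * M ^ (p - 2 - 1))) :=
          mul_le_mul_of_nonneg_left key (by positivity)
      _ = (p * c * p) * ((p - 1) * C2) * D * M ^ (p - 2 - 1) := by ring
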